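/- arXiv:1106.0736 — 4 statements merged into one kernel-verified Lean document; each statement's English description precedes it below -/
import Mathlib

section
/- The maximum of the sum Σ_l U_l over the feasible utility region equals the maximum over (p, x) with x in the standard simplex of min_l U_l(γ_l(p))/x_l, where the ratio is interpreted as +∞ when x_l = 0 and U_l > 0 (equivalently, the max-min formulation with constraints t·x_l ≤ U_l(γ_l(p)) attains the same optimal value t* = max Σ_l U_l(γ_l(p))). -/
/-- The maximum of the sum utility over the feasible region equals the optimal value of the
max-min formulation: maximize t subject to t·x_l ≤ U_l(γ_l(p)) with x in the simplex. -/
theorem stmt2 (L : ℕ) [NeZero L]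
    (h : Fin L → Fin L → ℝ) (n Pmax : Fin L → ℝ)
    (hh : ∀ k l, 0 < h k l) (hn : ∀ l, 0 < n l) (hPmax : ∀ l, 0 ≤ Pmax l)
    (U : Fin L → ℝ → ℝ)
    (hUc : ∀ l, ContinuousOn (U l) (Set.Ici 0))
    (hUm : ∀ l, StrictMonoOn (U l) (Set.Ici 0))
    (hU0 : ∀ l, U l 0 = 0)
    (hUnn : ∀ l y, 0 ≤ y → 0 ≤ U l y)
    (γ : (Fin L → ℝ) → Fin L → ℝ)
    (hγ : ∀ p l, γ p l = h l l * p l / (n l + ∑ k ∈ Finset.univ.erase l, h k l * p k))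
    (box : Set (Fin L → ℝ))
    (hbox : box = {p | ∀ l, 0 ≤ p l ∧ p l ≤ Pmax l})
    (tstar : ℝ)
    (hstar : IsGreatest {v | ∃ p ∈ box, v = ∑ l, U l (γ p l)} tstar) :
    IsGreatest {t | 0 ≤ t ∧ ∃ p ∈ box, ∃ x : Fin L → ℝ,
      (∀ l, 0 ≤ x l) ∧ ∑ l, x l = 1 ∧ ∀ l, t * x l ≤ U l (γ p l)} tstar := by
  obtain ⟨⟨p0, hp0, ht0⟩, hub⟩ := hstar
  have hγnn : ∀ p ∈ box, ∀ l, 0 ≤ γ p l := by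
    intro p hp l
    rw [hγ]
    apply div_nonneg
    · exact mul_nonneg (hh l l).le ((hbox ▸ hp) l).1
    · have : 0 ≤ ∑ k ∈ Finset.univ.erase l, h k l * p k :=
        Finset.sum_nonneg fun k _ => mul_nonneg (hh k l).le ((hbox ▸ hp) k).1
      linarith [hn l]
  have hUnn' : ∀ p ∈ box, ∀ l, 0 ≤ U l (γ p l) := fun p hp l => hUnn l _ (hγnn p hp l)
  have htnn : 0 ≤ tstar := ht0 ▸ Finset.sum_nonneg fun l _ => hUnn' p0 hp0 l
  have hL : (L : ℝ) ≠ 0 := Nat.cast_ne_zero.mpr (NeZero.ne L)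
  constructor
  · refine ⟨htnn, p0, hp0, ?_⟩
    rcases eq_or_lt_of_le htnn with heq | hpos
    · refine ⟨fun _ => (L : ℝ)⁻¹, fun l => by positivity, ?_, ?_⟩
      · simp [Finset.sum_const, Finset.card_univ, mul_inv_cancel₀ hL]
      · intro l
        rw [← heq, zero_mul]
        exact hUnn' p0 hp0 l
    · refine ⟨fun l => U l (γ p0 l) / tstar,
        fun l => div_nonneg (hUnn' p0 hp0 l) htnn, ?_, ?_⟩
      · rw [← Finset.sum_div, ← ht0, div_self hpos.ne']
      · intro l
        rw [mul_comm, div_mul_cancel₀ _ hpos.ne']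
  · rintro t ⟨ht, p, hp, x, hx0, hx1, hle⟩
    calc t = ∑ l, t * x l := by rw [← Finset.mul_sum, hx1, mul_one]
    _ ≤ ∑ l, U l (γ p l) := Finset.sum_le_sum fun l _ => hle l
    _ ≤ tstar := hub ⟨p, hp, rfl⟩
end

section
/- If I : ℝ^L_{≥0} → ℝ^L_{>0} is a standard interference function (positive, monotone, scalable) and a fixed point p* = I(p*) exists, then the fixed point is unique. -/
private lemma stmt7_key (L : ℕ) (I : (Fin L → ℝ) → Fin L → ℝ)
    (hpos : ∀ p, (∀ k, 0 ≤ p k) → ∀ l, 0 < I p l)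
    (hmono : ∀ p q : Fin L → ℝ, (∀ k, 0 ≤ q k) → (∀ k, q k ≤ p k) → ∀ l, I q l ≤ I p l)
    (hscale : ∀ α : ℝ, 1 < α → ∀ p, (∀ k, 0 ≤ p k) → ∀ l, I (α • p) l < α * I p l)
    (p q : Fin L → ℝ) (hp : ∀ k, 0 ≤ p k) (hq : ∀ k, 0 ≤ q k)
    (hfp : I p = p) (hfq : I q = q) : ∀ l, q l ≤ p l := by
  intro l0
  have hppos : ∀ l, 0 < p l := fun l => hfp ▸ hpos p hp l
  obtain ⟨j, -, hj⟩ := Finset.exists_max_image Finset.univ (fun l => q l / p l)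
    ⟨l0, Finset.mem_univ l0⟩
  set α := q j / p j with hα
  by_cases hα1 : α ≤ 1
  · have := hj l0 (Finset.mem_univ l0)
    have : q l0 / p l0 ≤ 1 := le_trans this hα1
    exact (div_le_one (hppos l0)).mp this
  · push_neg at hα1
    have hqle : ∀ k, q k ≤ α * p k := fun k => by
      have := hj k (Finset.mem_univ k)
      calc q k = (q k / p k) * p k := (div_mul_cancel₀ (q k) (hppos k).ne').symm
        _ ≤ α * p k := by
          exact mul_le_mul_of_nonneg_right this (hppos k).le
    have hαp : ∀ k, 0 ≤ (α • p) k := fun k => by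
      simp only [Pi.smul_apply, smul_eq_mul]
      exact mul_nonneg (le_of_lt (lt_trans one_pos hα1)) (hp k)
    have hstrict : ∀ l, q l < α * p l := fun l => by
      calc q l = I q l := by rw [hfq]
        _ ≤ I (α • p) l := hmono (α • p) q hq (fun k => hqle k) l
        _ < α * I p l := hscale α hα1 p hp l
        _ = α * p l := by rw [hfp]
    have hj' : q j = α * p j := by
      rw [hα, div_mul_cancel₀ (q j) (hppos j).ne']
    exact absurd hj' (ne_of_lt (hstrict j))

/-- A standard interference function (positive, monotone, scalable) has at most one
fixed point among nonnegative power vectors. -/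
theorem stmt7 (L : ℕ) (I : (Fin L → ℝ) → Fin L → ℝ)
    (hpos : ∀ p, (∀ k, 0 ≤ p k) → ∀ l, 0 < I p l)
    (hmono : ∀ p q : Fin L → ℝ, (∀ k, 0 ≤ q k) → (∀ k, q k ≤ p k) → ∀ l, I q l ≤ I p l)
    (hscale : ∀ α : ℝ, 1 < α → ∀ p, (∀ k, 0 ≤ p k) → ∀ l, I (α • p) l < α * I p l)
    (p q : Fin L → ℝ) (hp : ∀ k, 0 ≤ p k) (hq : ∀ k, 0 ≤ q k)
    (hfp : I p = p) (hfq : I q = q) : p = q := by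
  funext l
  exact le_antisymm (stmt7_key L I hpos hmono hscale q p hq hp hfq hfp l)
    (stmt7_key L I hpos hmono hscale p q hp hq hfp hfq l)
end

section
/- For a standard interference function I with fixed point p*, the synchronous iteration p(t+1) = I(p(t)) started from p(0) = 0 produces a componentwise nondecreasing sequence that converges to p*. -/
/-- For a standard interference function with fixed point p*, the synchronous iteration
started from 0 is componentwise nondecreasing and converges to p*. -/
theorem stmt8 (L : ℕ) (I : (Fin L → ℝ) → Fin L → ℝ)
    (hpos : ∀ p, (∀ k, 0 ≤ p k) → ∀ l, 0 < I p l)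
    (hmono : ∀ p q : Fin L → ℝ, (∀ k, 0 ≤ q k) → (∀ k, q k ≤ p k) → ∀ l, I q l ≤ I p l)
    (hscale : ∀ α : ℝ, 1 < α → ∀ p, (∀ k, 0 ≤ p k) → ∀ l, I (α • p) l < α * I p l)
    (pstar : Fin L → ℝ) (hps : ∀ k, 0 ≤ pstar k) (hfix : I pstar = pstar)
    (seq : ℕ → Fin L → ℝ) (hseq0 : seq 0 = 0)
    (hseqs : ∀ t, seq (t + 1) = I (seq t)) :
    (∀ t k, seq t k ≤ seq (t + 1) k) ∧
    Filter.Tendsto seq Filter.atTop (nhds pstar) := by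
  -- nonnegativity
  have h0 : ∀ t k, 0 ≤ seq t k := by
    intro t
    induction t with
    | zero => intro k; simp [hseq0]
    | succ n ih => intro k; rw [hseqs]; exact (hpos _ ih k).le
  -- monotonicity
  have hmon : ∀ t k, seq t k ≤ seq (t + 1) k := by
    intro t
    induction t with
    | zero => intro k; rw [hseq0, hseqs, hseq0]; exact (hpos 0 (by simp) k).le
    | succ n ih =>
      intro k
      rw [hseqs, hseqs]
      exact hmono _ _ (h0 n) ih k
  have hmonk : ∀ k, Monotone fun t => seq t k := fun k =>
    monotone_nat_of_le_succ fun t => hmon t k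
  -- bounded by pstar
  have hub : ∀ t k, seq t k ≤ pstar k := by
    intro t
    induction t with
    | zero => intro k; simp [hseq0, hps k]
    | succ n ih =>
      intro k
      rw [hseqs]
      calc I (seq n) k ≤ I pstar k := hmono _ _ (h0 n) ih k
        _ = pstar k := by rw [hfix]
  have hbdd : ∀ k, BddAbove (Set.range fun t => seq t k) := fun k =>
    ⟨pstar k, by rintro x ⟨t, rfl⟩; exact hub t k⟩
  set q : Fin L → ℝ := fun k => ⨆ t, seq t k with hq
  have hle : ∀ t k, seq t k ≤ q k := fun t k => le_ciSup (hbdd k) t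
  have htend : ∀ k, Filter.Tendsto (fun t => seq t k) Filter.atTop (nhds (q k)) :=
    fun k => tendsto_atTop_ciSup (hmonk k) (hbdd k)
  have hq0 : ∀ k, 0 ≤ q k := fun k => le_trans (by simp [hseq0]) (hle 0 k)
  have hqp : ∀ k, 0 < q k := by
    intro k
    have h1 : seq 1 k = I (seq 0) k := by rw [hseqs]
    have := hpos (seq 0) (h0 0) k
    exact lt_of_lt_of_le (by rw [← h1] at this; exact this) (hle 1 k)
  have hqps : ∀ k, q k ≤ pstar k := fun k => ciSup_le fun t => hub t k
  -- I q ≤ q using scalability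
  have hIq_le : ∀ k, I q k ≤ q k := by
    have key : ∀ α : ℝ, 1 < α → ∀ k, I q k < α * q k := by
      intro α hα k
      have hαpos : (0:ℝ) < α := lt_trans one_pos hα
      -- find t with α⁻¹ • q ≤ seq t
      have hev : ∀ᶠ t in Filter.atTop, ∀ j, α⁻¹ * q j < seq t j := by
        rw [Filter.eventually_all]
        intro j
        have hlt : α⁻¹ * q j < q j := by
          have : α⁻¹ < 1 := inv_lt_one_of_one_lt₀ hα
          nlinarith [hqp j]
        exact (htend j).eventually (eventually_gt_nhds hlt)
      obtain ⟨t, ht⟩ := hev.exists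
      have hinvq0 : ∀ j, 0 ≤ α⁻¹ • q j := fun j =>
        mul_nonneg (inv_nonneg.mpr hαpos.le) (hq0 j)
      have hsc := hscale α hα (α⁻¹ • q) (fun j => by simpa using hinvq0 j) k
      have heq : α • (α⁻¹ • q) = q := by
        rw [smul_smul, mul_inv_cancel₀ (ne_of_gt hαpos), one_smul]
      rw [heq] at hsc
      have h2 : I (α⁻¹ • q) k ≤ I (seq t) k :=
        hmono _ _ (fun j => by simpa using hinvq0 j) (fun j => (ht j).le) k
      have h3 : I (seq t) k ≤ q k := by rw [← hseqs]; exact hle (t+1) k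
      calc I q k < α * I (α⁻¹ • q) k := hsc
        _ ≤ α * q k := by
            apply mul_le_mul_of_nonneg_left _ hαpos.le
            exact le_trans h2 h3
    intro k
    by_contra h
    push_neg at h
    have hα : 1 < I q k / q k := (one_lt_div (hqp k)).mpr h
    have := key _ hα k
    rw [div_mul_cancel₀ _ (ne_of_gt (hqp k))] at this
    exact lt_irrefl _ this
  -- q ≤ I q
  have hq_le : ∀ k, q k ≤ I q k := by
    intro k
    apply ciSup_le
    intro t
    cases t with
    | zero => simp [hseq0]; exact (hpos q hq0 k).le
    | succ n => rw [hseqs]; exact hmono _ _ (h0 n) (fun j => hle n j) k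
  have hfixq : I q = q := funext fun k => le_antisymm (hIq_le k) (hq_le k)
  -- uniqueness: pstar ≤ q
  have hpq : ∀ k, pstar k ≤ q k := by
    rcases Nat.eq_zero_or_pos L with hL | hL
    · subst hL; intro k; exact absurd k.2 (by simp)
    · have : Nonempty (Fin L) := ⟨⟨0, hL⟩⟩
      obtain ⟨k0, hk0⟩ := Finite.exists_max fun k => pstar k / q k
      set α := pstar k0 / q k0 with hαdef
      rcases le_or_gt α 1 with h1 | h1
      · intro k
        have : pstar k / q k ≤ 1 := le_trans (hk0 k) h1
        rwa [div_le_one (hqp k)] at this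
      · exfalso
        have hplt : ∀ k, pstar k ≤ α * q k := by
          intro k
          have := hk0 k
          rwa [div_le_iff₀ (hqp k)] at this
        have h2 : pstar k0 ≤ I (α • q) k0 := by
          calc pstar k0 = I pstar k0 := by rw [hfix]
            _ ≤ I (α • q) k0 := by
                apply hmono _ _ hps
                intro j; simpa using hplt j
        have h3 : I (α • q) k0 < α * I q k0 := hscale α h1 q hq0 k0
        rw [hfixq] at h3
        have h4 : α * q k0 = pstar k0 := div_mul_cancel₀ _ (ne_of_gt (hqp k0))
        linarith [h2, h3]
  have hqpstar : q = pstar := funext fun k => le_antisymm (hqps k) (hpq k)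
  refine ⟨hmon, ?_⟩
  rw [tendsto_pi_nhds]
  intro k
  rw [← hqpstar]
  exact htend k
end

section
/- In the two-user case with nonnegative powers, the feasible SINR region {(γ_1(p), γ_2(p)) : 0 ≤ p ≤ P^max} is a compact subset of ℝ²_{≥0}, and its weak Pareto boundary is achieved by power vectors where at least one user transmits at maximum power or zero power. -/
/-- In the two-user case, the feasible SINR region is compact, lies in the nonnegative
quadrant, and every weak Pareto boundary point is achieved by a power vector where at
least one user transmits at maximum power or zero power. -/
theorem stmt10 (h11 h12 h21 h22 n1 n2 P1 P2 : ℝ)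
    (hh11 : 0 < h11) (hh12 : 0 < h12) (hh21 : 0 < h21) (hh22 : 0 < h22)
    (hn1 : 0 < n1) (hn2 : 0 < n2) (hP1 : 0 ≤ P1) (hP2 : 0 ≤ P2)
    (γ1 γ2 : ℝ × ℝ → ℝ)
    (hγ1 : ∀ p, γ1 p = h11 * p.1 / (n1 + h21 * p.2))
    (hγ2 : ∀ p, γ2 p = h22 * p.2 / (n2 + h12 * p.1))
    (S : Set (ℝ × ℝ))
    (hS : S = (fun p => (γ1 p, γ2 p)) '' (Set.Icc 0 P1 ×ˢ Set.Icc 0 P2)) :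
    IsCompact S ∧ S ⊆ {v : ℝ × ℝ | 0 ≤ v.1 ∧ 0 ≤ v.2} ∧
    ∀ v ∈ S, (¬ ∃ w ∈ S, v.1 < w.1 ∧ v.2 < w.2) →
      ∃ p ∈ Set.Icc (0 : ℝ) P1 ×ˢ Set.Icc (0 : ℝ) P2, (γ1 p, γ2 p) = v ∧
        (p.1 = 0 ∨ p.1 = P1 ∨ p.2 = 0 ∨ p.2 = P2) := by
  have hbox : IsCompact (Set.Icc (0:ℝ) P1 ×ˢ Set.Icc (0:ℝ) P2) :=
    isCompact_Icc.prod isCompact_Icc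
  refine ⟨?_, ?_, ?_⟩
  · -- compactness
    rw [hS]
    apply hbox.image_of_continuousOn
    apply ContinuousOn.prodMk
    · have : ∀ p ∈ Set.Icc (0:ℝ) P1 ×ˢ Set.Icc (0:ℝ) P2,
          γ1 p = h11 * p.1 / (n1 + h21 * p.2) := fun p _ => hγ1 p
      refine ContinuousOn.congr ?_ this
      apply ContinuousOn.div
      · exact (continuous_const.mul continuous_fst).continuousOn
      · exact (continuous_const.add (continuous_const.mul continuous_snd)).continuousOn
      · intro p hp
        have h2 : 0 ≤ p.2 := hp.2.1
        positivity
    · have : ∀ p ∈ Set.Icc (0:ℝ) P1 ×ˢ Set.Icc (0:ℝ) P2,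
          γ2 p = h22 * p.2 / (n2 + h12 * p.1) := fun p _ => hγ2 p
      refine ContinuousOn.congr ?_ this
      apply ContinuousOn.div
      · exact (continuous_const.mul continuous_snd).continuousOn
      · exact (continuous_const.add (continuous_const.mul continuous_fst)).continuousOn
      · intro p hp
        have h1 : 0 ≤ p.1 := hp.1.1
        positivity
  · -- nonnegativity
    rw [hS]
    rintro v ⟨p, hp, rfl⟩
    have h1 : 0 ≤ p.1 := hp.1.1
    have h2 : 0 ≤ p.2 := hp.2.1
    constructor
    · show 0 ≤ γ1 p
      rw [hγ1]; positivity
    · show 0 ≤ γ2 p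
      rw [hγ2]; positivity
  · -- Pareto boundary
    intro v hv hne
    rw [hS] at hv
    obtain ⟨p, hp, rfl⟩ := hv
    refine ⟨p, hp, rfl, ?_⟩
    by_contra hcon
    push_neg at hcon
    obtain ⟨hne0, hneP1, hne02, hneP2⟩ := hcon
    have h1 : 0 < p.1 := lt_of_le_of_ne hp.1.1 (Ne.symm hne0)
    have h2 : p.1 < P1 := lt_of_le_of_ne hp.1.2 hneP1
    have h3 : 0 < p.2 := lt_of_le_of_ne hp.2.1 (Ne.symm hne02)
    have h4 : p.2 < P2 := lt_of_le_of_ne hp.2.2 hneP2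
    set t : ℝ := min (P1 / p.1) (P2 / p.2) with ht
    have ht1 : 1 < t := lt_min ((one_lt_div h1).2 h2) ((one_lt_div h3).2 h4)
    have htp1 : t * p.1 ≤ P1 := by
      rw [← le_div_iff₀ h1]; exact min_le_left _ _
    have htp2 : t * p.2 ≤ P2 := by
      rw [← le_div_iff₀ h3]; exact min_le_right _ _
    have hq : ((t * p.1, t * p.2) : ℝ × ℝ) ∈ Set.Icc (0:ℝ) P1 ×ˢ Set.Icc (0:ℝ) P2 := by
      constructor
      · exact ⟨by positivity, htp1⟩
      · exact ⟨by positivity, htp2⟩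
    apply hne
    refine ⟨(γ1 (t * p.1, t * p.2), γ2 (t * p.1, t * p.2)), ?_, ?_, ?_⟩
    · rw [hS]; exact ⟨_, hq, rfl⟩
    · simp only [hγ1]
      have d1 : 0 < n1 + h21 * p.2 := by positivity
      have d2 : 0 < n1 + h21 * (t * p.2) := by
        have : 0 ≤ t * p.2 := by positivity
        positivity
      rw [div_lt_div_iff₀ d1 d2]
      nlinarith [mul_pos (mul_pos hh11 hn1) h1, sub_pos.2 ht1]
    · simp only [hγ2]
      have d1 : 0 < n2 + h12 * p.1 := by positivity
      have d2 : 0 < n2 + h12 * (t * p.1) := by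
        have : 0 ≤ t * p.1 := by positivity
        positivity
      rw [div_lt_div_iff₀ d1 d2]
      nlinarith [mul_pos (mul_pos hh22 hn2) h3, sub_pos.2 ht1]
end
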